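/- Let (u_n) be a sequence of real numbers, (a_p) and (g_p) nonnegative sequences with (a_n + g_n)/n → 0, such that u_{n+p} ≤ u_n + u_p + g_p + a_p for all n,p ≥ 1, and inf_n u_n/n > -∞. Then u_n/n converges to a finite limit. -/

import Mathlib

open Filter

lemma aux_iter_fekete (u a g : ℕ → ℝ)
    (hsub : ∀ n p, 1 ≤ n → 1 ≤ p → u (n + p) ≤ u n + u p + g p + a p)
    (p : ℕ) (hp : 1 ≤ p) :
    ∀ q r, 1 ≤ r → u (q * p + r) ≤ u r + q * (u p + g p + a p) := by
  intro q
  induction q with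
  | zero => intro r hr; simp
  | succ q ih =>
    intro r hr
    have h1 : (q + 1) * p + r = (q * p + r) + p := by ring
    have h2 : u ((q * p + r) + p) ≤ u (q * p + r) + u p + g p + a p :=
      hsub _ _ (by omega) hp
    have h3 := ih r hr
    rw [h1]
    push_cast
    nlinarith

/-- Generalized Fekete lemma for almost subadditive sequences. -/
theorem almost_subadditive_fekete (u a g : ℕ → ℝ)
    (ha : ∀ p, 0 ≤ a p) (hg : ∀ p, 0 ≤ g p)
    (hlim : Tendsto (fun n : ℕ => (a n + g n) / n) atTop (nhds 0))
    (hsub : ∀ n p, 1 ≤ n → 1 ≤ p → u (n + p) ≤ u n + u p + g p + a p)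
    (hbdd : BddBelow (Set.range fun n : ℕ => u (n + 1) / (n + 1))) :
    ∃ L : ℝ, Tendsto (fun n : ℕ => u n / n) atTop (nhds L) := by
  obtain ⟨b, hb⟩ := hbdd
  have hb' : ∀ n : ℕ, b ≤ u (n + 1) / (n + 1) := fun n => hb ⟨n, rfl⟩
  set f : ℕ → ℝ := fun p => (u (p + 1) + g (p + 1) + a (p + 1)) / (p + 1) with hf
  have hfb : ∀ p, b ≤ f p := by
    intro p
    refine le_trans (hb' p) ?_
    have hd : (0:ℝ) < (p:ℝ) + 1 := by positivity
    have hnum : u (p + 1) ≤ u (p + 1) + g (p + 1) + a (p + 1) := by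
      have := hg (p + 1); have := ha (p + 1); linarith
    exact div_le_div_of_nonneg_right hnum hd.le |>.trans_eq rfl
  have hfbdd : BddBelow (Set.range f) := ⟨b, by rintro x ⟨p, rfl⟩; exact hfb p⟩
  set L := ⨅ p, f p with hL
  have hLle : ∀ p, L ≤ f p := fun p => ciInf_le hfbdd p
  refine ⟨L, ?_⟩
  rw [Metric.tendsto_atTop]
  intro ε hε
  -- lower bound, eventually
  have h1 : ∀ᶠ n : ℕ in atTop, (a n + g n) / n < ε := by
    have := Metric.tendsto_atTop.mp hlim ε hε
    obtain ⟨N, hN⟩ := this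
    refine eventually_atTop.mpr ⟨N, fun n hn => ?_⟩
    have := hN n hn
    rw [Real.dist_eq, sub_zero] at this
    exact (le_abs_self _).trans_lt this
  have hlow : ∀ᶠ n : ℕ in atTop, L - ε < u n / n := by
    filter_upwards [h1, eventually_ge_atTop 1] with n hn h1n
    obtain ⟨m, rfl⟩ : ∃ m, n = m + 1 := ⟨n - 1, by omega⟩
    have hd : (0:ℝ) < (m:ℝ) + 1 := by positivity
    have hfm : L ≤ f m := hLle m
    have e1 : f m = u (m + 1) / ((m:ℝ) + 1) + (a (m + 1) + g (m + 1)) / ((m:ℝ) + 1) := by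
      simp only [hf]; ring
    have e2 : (a (m + 1) + g (m + 1)) / (((m:ℕ):ℝ) + 1) < ε := by
      have := hn
      push_cast at this ⊢
      convert this using 2 <;> push_cast <;> ring
    push_cast
    rw [e1] at hfm
    linarith [e2]
  -- upper bound, eventually
  have hLlt : L < L + ε / 2 := by linarith
  obtain ⟨i, hi⟩ := exists_lt_of_ciInf_lt hLlt
  set p := i + 1 with hpdef
  have hp : 1 ≤ p := by omega
  have hpR : (0:ℝ) < (p:ℝ) := by positivity
  set C := u p + g p + a p with hC
  have hCp : C / (p:ℝ) < L + ε / 2 := by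
    have : f i = C / (p:ℝ) := by simp only [hf, hC, hpdef]; push_cast; ring_nf
    rw [← this]; exact hi
  set D := C / (p:ℝ) with hD
  have hCD : C = D * p := by rw [hD]; field_simp
  set M := (Finset.Icc 1 p).sup' (Finset.nonempty_Icc.mpr hp) u with hM
  have hMle : ∀ r, 1 ≤ r → r ≤ p → u r ≤ M :=
    fun r hr1 hr2 => Finset.le_sup' u (Finset.mem_Icc.mpr ⟨hr1, hr2⟩)
  have htail : ∀ᶠ n : ℕ in atTop, (M + |C|) / (n:ℝ) < ε / 2 := by
    have h := tendsto_const_div_atTop_nhds_zero_nat (M + |C|)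
    obtain ⟨N, hN⟩ := Metric.tendsto_atTop.mp h (ε / 2) (half_pos hε)
    refine eventually_atTop.mpr ⟨N, fun n hn => ?_⟩
    have := hN n hn
    rw [Real.dist_eq, sub_zero] at this
    exact (le_abs_self _).trans_lt this
  have hup : ∀ᶠ n : ℕ in atTop, u n / n < L + ε := by
    filter_upwards [htail, eventually_ge_atTop 1] with n htn h1n
    set q := (n - 1) / p with hq
    set r := (n - 1) % p + 1 with hr
    have hdm := Nat.div_add_mod (n - 1) p
    have hqr : q * p + r = n := by rw [hq, hr, Nat.mul_comm]; omega
    have hr1 : 1 ≤ r := by omega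
    have hrp : r ≤ p := by
      have := Nat.mod_lt (n - 1) (show 0 < p by omega)
      omega
    have key := aux_iter_fekete u a g hsub p hp q r hr1
    rw [hqr] at key
    rw [← hC] at key
    have hur : u r ≤ M := hMle r hr1 hrp
    have hn0 : (0:ℝ) < (n:ℝ) := by
      have : 0 < n := by omega
      exact_mod_cast this
    have hqp1 : (q:ℝ) * (p:ℝ) ≤ (n:ℝ) := by
      have : q * p ≤ n := by omega
      exact_mod_cast this
    have hqp2 : (n:ℝ) - (p:ℝ) ≤ (q:ℝ) * (p:ℝ) := by
      have h' : n ≤ q * p + p := by omega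
      have : (n:ℝ) ≤ (q:ℝ) * (p:ℝ) + (p:ℝ) := by exact_mod_cast h'
      linarith
    have hqC : (q:ℝ) * C ≤ (n:ℝ) * D + |C| := by
      rcases le_or_gt 0 D with h | h
      · calc (q:ℝ) * C = ((q:ℝ) * (p:ℝ)) * D := by rw [hCD]; ring
          _ ≤ (n:ℝ) * D := mul_le_mul_of_nonneg_right hqp1 h
          _ ≤ (n:ℝ) * D + |C| := le_add_of_nonneg_right (abs_nonneg _)
      · have hCneg : C < 0 := by
          rw [hCD]; exact mul_neg_of_neg_of_pos h hpR
        have habs : |C| = -C := abs_of_neg hCneg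
        have hmul : ((q:ℝ) * (p:ℝ)) * D ≤ ((n:ℝ) - (p:ℝ)) * D :=
          mul_le_mul_of_nonpos_right hqp2 h.le
        have : (q:ℝ) * C = ((q:ℝ) * (p:ℝ)) * D := by rw [hCD]; ring
        rw [this, habs, hCD]
        nlinarith
    have hun : u n ≤ M + |C| + (n:ℝ) * D := by linarith
    have hdiv : u n / n ≤ (M + |C| + (n:ℝ) * D) / n := by
      apply div_le_div_of_nonneg_right hun hn0.le |>.trans_eq rfl
    have heq : (M + |C| + (n:ℝ) * D) / n = (M + |C|) / n + D := by
      field_simp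
    rw [heq] at hdiv
    linarith
  obtain ⟨N, hN⟩ := eventually_atTop.mp (hlow.and hup)
  refine ⟨N, fun n hn => ?_⟩
  obtain ⟨h1', h2'⟩ := hN n hn
  rw [Real.dist_eq, abs_lt]
  constructor <;> linarith
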